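/- There exists γ₀ ∈ (0,1] such that the following holds. Let X be a uniformly convex real Banach space, let C be a nonempty compact convex subset of X, let l ∈ ℕ with l ≥ 2, let γ ∈ (0, γ₀] and μ ∈ [0,1/2] with 2μ ≤ γ, and let T₁, T₂, …, T_l : C → C be pairwise commuting mappings each satisfying condition B_{γ,μ} on C. Fix λ ∈ (0,1) and a sequence {α_n} in [0, 1/2] with liminf_{n→∞} α_n = 0, limsup_{n→∞} α_n > 0, and lim_{n→∞}(α_{n+1} − α_n) = 0. For x₀ ∈ C define {x_n} by x_{n+1} = λ(1 − Σ_{k=1}^{l−1} α_n^k) T₁ x_n + λ Σ_{k=2}^{l} α_n^{k−1} T_k x_n + (1 − λ) x_n for n ≥ 0. Then {x_n} converges strongly (in norm) to a point z ∈ C with T_k z = z for all k = 1, …, l. -/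

import Mathlib

open Filter Set Topology

set_option linter.unusedSectionVars false
set_option linter.unusedVariables false

universe u

section Aux

variable {X : Type u} [NormedAddCommGroup X] [NormedSpace ℝ X]

lemma my_tendsto_zero_of_eventually_lt {f : ℕ → ℝ} (h0 : ∀ n, 0 ≤ f n)
    (h : ∀ ε : ℝ, 0 < ε → ∀ᶠ n in atTop, f n < ε) :
    Tendsto f atTop (𝓝 0) := by
  refine Metric.tendsto_atTop.2 fun ε hε => ?_
  obtain ⟨N, hN⟩ := eventually_atTop.1 (h ε hε)
  exact ⟨N, fun n hn => by
    rw [Real.dist_eq, sub_zero, abs_of_nonneg (h0 n)]; exact hN n hn⟩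

/-- Scaled uniform convexity. -/
lemma my_suc [UniformConvexSpace X] {ε : ℝ} (hε : 0 < ε) :
    ∃ δ : ℝ, 0 < δ ∧ ∀ R : ℝ, 0 < R → ∀ a b : X, ‖a‖ ≤ R → ‖b‖ ≤ R →
      ε * R ≤ ‖a - b‖ → ‖a + b‖ ≤ (2 - δ) * R := by
  obtain ⟨δ, hδ, h⟩ := exists_forall_closed_ball_dist_add_le_two_sub X hε
  refine ⟨δ, hδ, fun R hR a b ha hb hab => ?_⟩
  have hRinv : (0:ℝ) ≤ R⁻¹ := (inv_pos.2 hR).le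
  have h1 : ‖R⁻¹ • a‖ ≤ 1 := by
    rw [norm_smul, Real.norm_eq_abs, abs_of_nonneg hRinv]
    calc R⁻¹ * ‖a‖ ≤ R⁻¹ * R := by gcongr
    _ = 1 := inv_mul_cancel₀ hR.ne'
  have h2 : ‖R⁻¹ • b‖ ≤ 1 := by
    rw [norm_smul, Real.norm_eq_abs, abs_of_nonneg hRinv]
    calc R⁻¹ * ‖b‖ ≤ R⁻¹ * R := by gcongr
    _ = 1 := inv_mul_cancel₀ hR.ne'
  have h3 : ε ≤ ‖R⁻¹ • a - R⁻¹ • b‖ := by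
    rw [← smul_sub, norm_smul, Real.norm_eq_abs, abs_of_nonneg hRinv]
    rw [inv_mul_eq_div, le_div_iff₀ hR]
    exact hab
  have h4 := h h1 h2 h3
  rw [← smul_add, norm_smul, Real.norm_eq_abs, abs_of_nonneg hRinv] at h4
  calc ‖a + b‖ = R * (R⁻¹ * ‖a + b‖) := by field_simp
  _ ≤ R * (2 - δ) := by
      have : (0:ℝ) ≤ R := hR.le
      gcongr
  _ = (2 - δ) * R := mul_comm _ _

variable {C : Set X} {T : X → X} {γ μ : ℝ}

section CondB

variable (hγ0 : 0 < γ) (hγ : γ ≤ 1/2) (hμ0 : 0 ≤ μ) (hμγ : 2*μ ≤ γ)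
  (hT : Set.MapsTo T C C)
  (hB : ∀ x ∈ C, ∀ y ∈ C, γ*‖x - T x‖ ≤ ‖x - y‖ + μ*‖y - T y‖ →
    ‖T x - T y‖ ≤ (1-γ)*‖x - y‖ + μ*(‖x - T y‖ + ‖y - T x‖))

include hγ0 hγ hμ0 hμγ hT hB

/-- displacement is nonincreasing under T. -/
lemma condB_disp_le {x : X} (hx : x ∈ C) : ‖T x - T (T x)‖ ≤ ‖x - T x‖ := by
  have hxx : T x ∈ C := hT hx
  have hpre : γ*‖x - T x‖ ≤ ‖x - T x‖ + μ*‖T x - T (T x)‖ := by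
    nlinarith [norm_nonneg (x - T x), norm_nonneg (T x - T (T x))]
  have h := hB x hx (T x) hxx hpre
  have htri : ‖x - T (T x)‖ ≤ ‖x - T x‖ + ‖T x - T (T x)‖ := norm_sub_le_norm_sub_add_norm_sub _ _ _
  have h0 : ‖T x - T x‖ = 0 := by simp
  nlinarith [norm_nonneg (x - T x), norm_nonneg (T x - T (T x)),
    mul_nonneg (by linarith : (0:ℝ) ≤ γ - 2*μ) (norm_nonneg (x - T x))]

/-- dichotomy for small γ. -/
lemma condB_dichotomy {x y : X} (hx : x ∈ C) (hy : y ∈ C) :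
    γ*‖x - T x‖ ≤ ‖x - y‖ + μ*‖y - T y‖ ∨
    γ*‖T x - T (T x)‖ ≤ ‖T x - y‖ + μ*‖y - T y‖ := by
  by_contra hcon
  push_neg at hcon
  obtain ⟨h1, h2⟩ := hcon
  have hd := condB_disp_le hγ0 hγ hμ0 hμγ hT hB hx
  have htri : ‖x - T x‖ ≤ ‖x - y‖ + ‖y - T x‖ := norm_sub_le_norm_sub_add_norm_sub _ _ _
  have hyx : ‖y - T x‖ = ‖T x - y‖ := norm_sub_rev _ _
  nlinarith [norm_nonneg (x - T x), norm_nonneg (y - T y),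
    mul_nonneg hμ0 (norm_nonneg (y - T y))]

/-- half key inequality (when premise holds). -/
lemma condB_KI_half {x y : X} (hx : x ∈ C) (hy : y ∈ C)
    (hpre : γ*‖x - T x‖ ≤ ‖x - y‖ + μ*‖y - T y‖) :
    ‖x - T y‖ ≤ 3*‖x - T x‖ + ‖x - y‖ := by
  have h := hB x hx y hy hpre
  have ht1 : ‖x - T y‖ ≤ ‖x - T x‖ + ‖T x - T y‖ := norm_sub_le_norm_sub_add_norm_sub _ _ _
  have ht2 : ‖y - T x‖ ≤ ‖y - x‖ + ‖x - T x‖ := norm_sub_le_norm_sub_add_norm_sub _ _ _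
  have hrev : ‖y - x‖ = ‖x - y‖ := norm_sub_rev _ _
  nlinarith [norm_nonneg (x - T x), norm_nonneg (x - y), norm_nonneg (x - T y),
    norm_nonneg (T x - T y),
    mul_nonneg (by linarith : (0:ℝ) ≤ γ - 2*μ) (norm_nonneg (x - y)),
    mul_nonneg hμ0 (norm_nonneg (x - T y)),
    mul_nonneg (by linarith : (0:ℝ) ≤ 1 - 2*μ) (norm_nonneg (T x - T y))]

/-- key inequality. -/
lemma condB_KI {x y : X} (hx : x ∈ C) (hy : y ∈ C) :
    ‖x - T y‖ ≤ 5*‖x - T x‖ + ‖x - y‖ := by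
  rcases condB_dichotomy hγ0 hγ hμ0 hμγ hT hB hx hy with hpre | hpre
  · have := condB_KI_half hγ0 hγ hμ0 hμγ hT hB hx hy hpre
    nlinarith [norm_nonneg (x - T x)]
  · have hTx : T x ∈ C := hT hx
    have h1 := condB_KI_half hγ0 hγ hμ0 hμγ hT hB hTx hy hpre
    have hd := condB_disp_le hγ0 hγ hμ0 hμγ hT hB hx
    have ht1 : ‖x - T y‖ ≤ ‖x - T x‖ + ‖T x - T y‖ := norm_sub_le_norm_sub_add_norm_sub _ _ _
    have ht2 : ‖T x - y‖ ≤ ‖T x - x‖ + ‖x - y‖ := norm_sub_le_norm_sub_add_norm_sub _ _ _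
    have hrev : ‖T x - x‖ = ‖x - T x‖ := norm_sub_rev _ _
    linarith

/-- approximate fixed point transfer. -/
lemma condB_approx {x v : X} (hx : x ∈ C) (hv : v ∈ C) :
    ‖v - T v‖ ≤ 2*‖x - v‖ + 5*‖x - T x‖ := by
  have h1 : ‖v - T v‖ ≤ ‖v - x‖ + ‖x - T v‖ := norm_sub_le_norm_sub_add_norm_sub _ _ _
  have h2 := condB_KI hγ0 hγ hμ0 hμγ hT hB hx hv
  have hrev : ‖v - x‖ = ‖x - v‖ := norm_sub_rev _ _
  linarith

/-- quasi-nonexpansive w.r.t. fixed points. -/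
lemma condB_quasi {p y : X} (hp : p ∈ C) (hy : y ∈ C) (hfix : T p = p) :
    ‖T y - p‖ ≤ ‖y - p‖ := by
  have h := condB_KI hγ0 hγ hμ0 hμγ hT hB hp hy
  rw [hfix] at h
  simp only [sub_self, norm_zero] at h
  calc ‖T y - p‖ = ‖p - T y‖ := norm_sub_rev _ _
  _ ≤ 5*0 + ‖p - y‖ := by simpa using h
  _ = ‖y - p‖ := by rw [norm_sub_rev]; ring

/-- Picard displacement tends to zero. -/
lemma condB_picard_disp [UniformConvexSpace X]
    (hbdd : ∃ D : ℝ, ∀ a ∈ C, ∀ b ∈ C, ‖a - b‖ ≤ D)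
    {y : ℕ → X} (hy0 : y 0 ∈ C) (hrec : ∀ n, y (n+1) = T (y n)) :
    Tendsto (fun n => ‖y n - y (n+1)‖) atTop (𝓝 0) := by
  have hyC : ∀ n, y n ∈ C := by
    intro n; induction n with
    | zero => exact hy0
    | succ n ih => rw [hrec]; exact hT ih
  set d : ℕ → ℝ := fun n => ‖y n - y (n+1)‖ with hd
  have hd0 : ∀ n, 0 ≤ d n := fun n => norm_nonneg _
  have hstep : ∀ n, d (n+1) ≤ d n := by
    intro n
    have e1 : y (n+1) = T (y n) := hrec n
    have e2 : y (n+2) = T (T (y n)) := by rw [hrec (n+1), e1]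
    show ‖y (n+1) - y (n+2)‖ ≤ ‖y n - y (n+1)‖
    rw [e2, e1]
    exact condB_disp_le hγ0 hγ hμ0 hμγ hT hB (hyC n)
  have hanti : Antitone d := antitone_nat_of_succ_le hstep
  have hbb : BddBelow (Set.range d) := ⟨0, by rintro v ⟨n, rfl⟩; exact hd0 n⟩
  have htend : Tendsto d atTop (𝓝 (⨅ n, d n)) := tendsto_atTop_ciInf hanti hbb
  set δ := ⨅ n, d n with hδdef
  have hδle : ∀ n, δ ≤ d n := fun n => ciInf_le hbb n
  have hδ0 : 0 ≤ δ := le_ciInf hd0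
  suffices hδz : δ = 0 by rw [hδz] at htend; exact htend
  by_contra hδz
  have hδpos : 0 < δ := hδ0.lt_of_ne (Ne.symm hδz)
  have key : ∀ n, d (n+1) ≤ (1-γ)*d n + μ*‖y n - y (n+2)‖ := by
    intro n
    have hpre : γ*‖y n - T (y n)‖ ≤ ‖y n - y (n+1)‖ + μ*‖y (n+1) - T (y (n+1))‖ := by
      rw [← hrec n]
      nlinarith [norm_nonneg (y n - y (n+1)), norm_nonneg (y (n+1) - T (y (n+1)))]
    have h := hB (y n) (hyC n) (y (n+1)) (hyC (n+1)) hpre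
    rw [← hrec n, ← hrec (n+1)] at h
    simp only [sub_self, norm_zero, add_zero] at h
    exact h
  rcases eq_or_lt_of_le hμ0 with hμz | hμpos
  · -- μ = 0 : geometric decay
    have hgeo : ∀ n, d n ≤ (1-γ)^n * d 0 := by
      intro n; induction n with
      | zero => simp
      | succ n ih =>
        have := key n
        rw [← hμz] at this
        simp only [zero_mul, add_zero] at this
        calc d (n+1) ≤ (1-γ) * d n := this
        _ ≤ (1-γ) * ((1-γ)^n * d 0) := by
            have h1γ : (0:ℝ) ≤ 1 - γ := by linarith
            exact mul_le_mul_of_nonneg_left ih h1γ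
        _ = (1-γ)^(n+1) * d 0 := by ring
    have hlim : Tendsto (fun n => (1-γ)^n * d 0) atTop (𝓝 0) := by
      have h1 : |1 - γ| < 1 := by rw [abs_of_nonneg (by linarith)]; linarith
      simpa using (tendsto_pow_atTop_nhds_zero_of_abs_lt_one h1).mul_const (d 0)
    have : δ ≤ 0 := ge_of_tendsto' hlim (fun n => (hδle n).trans (hgeo n))
    linarith
  · -- μ > 0 : uniform convexity + escape to infinity
    have hΔ : Tendsto (fun n => d n - d (n+1)) atTop (𝓝 0) := by
      have h2 : Tendsto (fun n => d (n+1)) atTop (𝓝 δ) :=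
        htend.comp (tendsto_add_atTop_nat 1)
      simpa using htend.sub h2
    set w : ℕ → X := fun n => y n - y (n+1) with hw
    have hsmall : ∀ ε : ℝ, 0 < ε → ∀ᶠ n in atTop, ‖w n - w (n+1)‖ < ε := by
      intro ε hε
      have hd00 : 0 < d 0 := lt_of_lt_of_le hδpos (hδle 0)
      obtain ⟨δ', hδ'pos, hsuc⟩ := my_suc (X := X) (div_pos hε hd00)
      have ev : ∀ᶠ n in atTop, d n - d (n+1) < μ*δ'*δ :=
        hΔ.eventually (gt_mem_nhds (by positivity))
      filter_upwards [ev] with n hn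
      by_contra hcon
      push_neg at hcon
      have hdn : 0 < d n := lt_of_lt_of_le hδpos (hδle n)
      have h1 : ‖w n‖ ≤ d n := le_of_eq rfl
      have h2 : ‖w (n+1)‖ ≤ d n := hstep n
      have h3 : (ε / d 0) * d n ≤ ‖w n - w (n+1)‖ := by
        have hdle : d n ≤ d 0 := hanti (Nat.zero_le n)
        calc (ε / d 0) * d n ≤ (ε / d 0) * d 0 := by
              have : (0:ℝ) ≤ ε / d 0 := by positivity
              exact mul_le_mul_of_nonneg_left hdle this
        _ = ε := div_mul_cancel₀ ε hd00.ne'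
        _ ≤ ‖w n - w (n+1)‖ := hcon
      have h4 := hsuc (d n) hdn (w n) (w (n+1)) h1 h2 h3
      have h5 : w n + w (n+1) = y n - y (n+2) := by simp only [hw]; abel
      have h6 := key n
      rw [← h5] at h6
      have h7 : μ * ‖w n + w (n+1)‖ ≤ μ * ((2-δ')*d n) :=
        mul_le_mul_of_nonneg_left h4 hμpos.le
      have h8 : 0 ≤ (γ - 2*μ) * d n := mul_nonneg (by linarith) (hd0 n)
      have h9 : μ*δ'*δ ≤ μ*δ'*d n := by
        have : (0:ℝ) ≤ μ*δ' := by positivity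
        exact mul_le_mul_of_nonneg_left (hδle n) this
      nlinarith
    obtain ⟨D, hD⟩ := hbdd
    obtain ⟨k, hk⟩ := exists_nat_gt ((D+1)/δ)
    have hkδ : D + 1 < k*δ := (div_lt_iff₀ hδpos).1 hk
    set ε : ℝ := 1/((k:ℝ)^2+1) with hε
    have hεpos : 0 < ε := by positivity
    obtain ⟨N, hN⟩ := eventually_atTop.1 (hsmall ε hεpos)
    have hchain : ∀ i : ℕ, ‖w (N+i) - w N‖ ≤ i*ε := by
      intro i; induction i with
      | zero => simp
      | succ i ih =>
        have ht : ‖w (N+i+1) - w N‖ ≤ ‖w (N+i+1) - w (N+i)‖ + ‖w (N+i) - w N‖ :=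
          norm_sub_le_norm_sub_add_norm_sub _ _ _
        have hs : ‖w (N+i+1) - w (N+i)‖ < ε := by
          rw [norm_sub_rev]; exact hN (N+i) (by omega)
        have : (N + (i+1)) = (N + i + 1) := by omega
        rw [this]
        push_cast
        linarith
    have tele : ∑ i ∈ Finset.range k, w (N+i) = y N - y (N+k) := by
      have := Finset.sum_range_sub' (f := fun i => y (N+i)) k
      simpa [hw, Finset.sum_sub_distrib, add_assoc] using this
    have hsplit : ∑ i ∈ Finset.range k, (w (N+i) - w N)
        = (y N - y (N+k)) - (k:ℝ) • w N := by
      rw [Finset.sum_sub_distrib, tele, Finset.sum_const, Finset.card_range,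
        Nat.cast_smul_eq_nsmul]
    have hnormdiffs : ‖∑ i ∈ Finset.range k, (w (N+i) - w N)‖ ≤ (k:ℝ)*((k:ℝ)*ε) := by
      calc ‖∑ i ∈ Finset.range k, (w (N+i) - w N)‖
          ≤ ∑ i ∈ Finset.range k, ‖w (N+i) - w N‖ := norm_sum_le _ _
      _ ≤ ∑ i ∈ Finset.range k, (k:ℝ)*ε := by
          apply Finset.sum_le_sum
          intro i hi
          have hik : (i:ℝ) ≤ (k:ℝ) := by
            exact_mod_cast (Finset.mem_range.1 hi).le
          calc ‖w (N+i) - w N‖ ≤ i*ε := hchain i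
          _ ≤ (k:ℝ)*ε := mul_le_mul_of_nonneg_right hik hεpos.le
      _ = (k:ℝ)*((k:ℝ)*ε) := by
          rw [Finset.sum_const, Finset.card_range, nsmul_eq_mul]
    have hk2ε : (k:ℝ)*((k:ℝ)*ε) ≤ 1 := by
      rw [hε]
      rw [mul_one_div, ← mul_div_assoc]
      rw [div_le_one (by positivity)]
      nlinarith [sq_nonneg (k:ℝ)]
    have hlower : (k:ℝ)*δ - 1 ≤ ‖y N - y (N+k)‖ := by
      have heq : (k:ℝ) • w N = (y N - y (N+k)) - ∑ i ∈ Finset.range k, (w (N+i) - w N) := by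
        rw [hsplit]; abel
      have h1 : ‖(k:ℝ) • w N‖ ≤ ‖y N - y (N+k)‖ + ‖∑ i ∈ Finset.range k, (w (N+i) - w N)‖ := by
        rw [heq]; exact norm_sub_le _ _
      have h2 : ‖(k:ℝ) • w N‖ = (k:ℝ) * d N := by
        rw [norm_smul, Real.norm_natCast]
      have h3 : (k:ℝ)*δ ≤ (k:ℝ)*d N :=
        mul_le_mul_of_nonneg_left (hδle N) (Nat.cast_nonneg k)
      linarith
    have hupper : ‖y N - y (N+k)‖ ≤ D := hD _ (hyC N) _ (hyC (N+k))
    linarith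

/-- Picard iteration clusters at a fixed point. -/
lemma condB_picard_fix [UniformConvexSpace X] (hcomp : IsCompact C) {p : X} (hp : p ∈ C) :
    ∃ v ∈ C, T v = v ∧ ∃ φ : ℕ → ℕ, StrictMono φ ∧
      Tendsto (fun j => T^[φ j] p) atTop (𝓝 v) := by
  set y : ℕ → X := fun n => T^[n] p with hy
  have hrec : ∀ n, y (n+1) = T (y n) := fun n => Function.iterate_succ_apply' T n p
  have hy0 : y 0 ∈ C := hp
  have hyC : ∀ n, y n ∈ C := by
    intro n; induction n with
    | zero => exact hy0
    | succ n ih => rw [hrec]; exact hT ih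
  have hbdd : ∃ D : ℝ, ∀ a ∈ C, ∀ b ∈ C, ‖a - b‖ ≤ D := by
    obtain ⟨D, hD⟩ := Metric.isBounded_iff.1 hcomp.isBounded
    exact ⟨D, fun a ha b hb => by rw [← dist_eq_norm]; exact hD ha hb⟩
  have hdisp := condB_picard_disp hγ0 hγ hμ0 hμγ hT hB hbdd hy0 hrec
  obtain ⟨v, hvC, φ, hφ, hconv⟩ := hcomp.tendsto_subseq hyC
  refine ⟨v, hvC, ?_, φ, hφ, hconv⟩
  have hdist : Tendsto (fun j => ‖y (φ j) - v‖) atTop (𝓝 0) := by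
    have := tendsto_iff_dist_tendsto_zero.1 hconv
    simpa [dist_eq_norm, Function.comp] using this
  have hdisp2 : Tendsto (fun j => ‖y (φ j) - y (φ j + 1)‖) atTop (𝓝 0) :=
    hdisp.comp hφ.tendsto_atTop
  have hb : ∀ j, ‖v - T v‖ ≤ 2*‖y (φ j) - v‖ + 5*‖y (φ j) - y (φ j + 1)‖ := by
    intro j
    have h := condB_approx hγ0 hγ hμ0 hμγ hT hB (hyC (φ j)) hvC
    rw [← hrec (φ j)] at h
    exact h
  have hlim : Tendsto (fun j => 2*‖y (φ j) - v‖ + 5*‖y (φ j) - y (φ j + 1)‖) atTop (𝓝 0) := by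
    have := (hdist.const_mul 2).add (hdisp2.const_mul 5)
    simpa using this
  have h0 : ‖v - T v‖ ≤ 0 := ge_of_tendsto' hlim hb
  have : v - T v = 0 := norm_le_zero_iff.1 h0
  have := sub_eq_zero.1 this
  exact this.symm

end CondB

lemma geom_half (m : ℕ) : ∑ k ∈ Finset.Icc 1 m, (1/2:ℝ)^k = 1 - (1/2)^m := by
  induction m with
  | zero => simp
  | succ m ih =>
    rw [Finset.sum_Icc_succ_top (by omega : 1 ≤ m + 1), ih]
    ring

end Aux

set_option maxHeartbeats 2000000 in
theorem condB_finite_commuting_convergence :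
    ∃ γ₀ : ℝ, γ₀ ∈ Set.Ioc (0 : ℝ) 1 ∧
      ∀ (X : Type u) [NormedAddCommGroup X] [NormedSpace ℝ X] [CompleteSpace X]
        [UniformConvexSpace X]
        (C : Set X), C.Nonempty → Convex ℝ C → IsCompact C →
        ∀ L : ℕ, 2 ≤ L →
        ∀ γ μ : ℝ, γ ∈ Set.Ioc (0 : ℝ) γ₀ → μ ∈ Set.Icc (0 : ℝ) (1 / 2) →
          2 * μ ≤ γ →
        ∀ T : ℕ → X → X,
          (∀ k, 1 ≤ k → k ≤ L → Set.MapsTo (T k) C C) →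
          (∀ i j, 1 ≤ i → i ≤ L → 1 ≤ j → j ≤ L →
            ∀ x ∈ C, T i (T j x) = T j (T i x)) →
          (∀ k, 1 ≤ k → k ≤ L → ∀ x ∈ C, ∀ y ∈ C,
            γ * ‖x - T k x‖ ≤ ‖x - y‖ + μ * ‖y - T k y‖ →
              ‖T k x - T k y‖ ≤ (1 - γ) * ‖x - y‖
                + μ * (‖x - T k y‖ + ‖y - T k x‖)) →
        ∀ l : ℝ, l ∈ Set.Ioo (0 : ℝ) 1 →
        ∀ α : ℕ → ℝ, (∀ n, α n ∈ Set.Icc (0 : ℝ) (1 / 2)) →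
          Filter.liminf α Filter.atTop = 0 →
          0 < Filter.limsup α Filter.atTop →
          Filter.Tendsto (fun n => α (n + 1) - α n) Filter.atTop (nhds 0) →
        ∀ x : ℕ → X, x 0 ∈ C →
          (∀ n : ℕ, x (n + 1) =
            (l * (1 - ∑ k ∈ Finset.Icc 1 (L - 1), (α n) ^ k)) • T 1 (x n)
              + l • (∑ k ∈ Finset.Icc 2 L, (α n) ^ (k - 1) • T k (x n))
              + (1 - l) • x n) →
          ∃ z ∈ C, (∀ k, 1 ≤ k → k ≤ L → T k z = z) ∧
            Filter.Tendsto x Filter.atTop (nhds z) := by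
  refine ⟨1/2, ⟨by norm_num, by norm_num⟩, ?_⟩
  intro X _ _ _ _ C hCne hCconv hCcomp L hL γ μ hγmem hμmem hμγ T hTmap hTcomm hTB
    l hl α hα _hliminf hlimsup _hdiff x hx0 hxrec
  obtain ⟨hγ0, hγhalf⟩ := hγmem
  obtain ⟨hμ0, _hμhalf⟩ := hμmem
  obtain ⟨hl0, hl1⟩ := hl
  -- Step 1 : a common fixed point z₀ of the whole family.
  have hcommonfix : ∀ m : ℕ, m ≤ L → ∃ p ∈ C, ∀ k, 1 ≤ k → k ≤ m → T k p = p := by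
    intro m
    induction m with
    | zero =>
      intro _
      obtain ⟨p, hp⟩ := hCne
      exact ⟨p, hp, fun k hk1 hk0 => by omega⟩
    | succ m ih =>
      intro hmL
      obtain ⟨p, hpC, hpfix⟩ := ih (by omega)
      have h1m : 1 ≤ m+1 := by omega
      have hTm := hTmap (m+1) h1m hmL
      have hBm := hTB (m+1) h1m hmL
      obtain ⟨v, hvC, hvfix, φ, hφ, hconv⟩ :=
        condB_picard_fix hγ0 hγhalf hμ0 hμγ hTm hBm hCcomp hpC
      refine ⟨v, hvC, ?_⟩
      have hiter : ∀ n, (T (m+1))^[n] p ∈ C ∧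
          ∀ k, 1 ≤ k → k ≤ m → T k ((T (m+1))^[n] p) = (T (m+1))^[n] p := by
        intro n; induction n with
        | zero => exact ⟨hpC, hpfix⟩
        | succ n ihn =>
          rw [Function.iterate_succ_apply']
          refine ⟨hTm ihn.1, fun k hk1 hkm => ?_⟩
          rw [hTcomm k (m+1) hk1 (by omega) h1m hmL _ ihn.1, ihn.2 k hk1 hkm]
      intro k hk1 hkm1
      rcases Nat.lt_or_ge k (m+1) with hkm | hkm
      · have hkm' : k ≤ m := by omega
        have hkL : k ≤ L := by omega
        have hTk := hTmap k hk1 hkL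
        have hBk := hTB k hk1 hkL
        have hb : ∀ j, ‖v - T k v‖ ≤ 2*‖(T (m+1))^[φ j] p - v‖ := by
          intro j
          have h := condB_approx hγ0 hγhalf hμ0 hμγ hTk hBk (hiter (φ j)).1 hvC
          rw [(hiter (φ j)).2 k hk1 hkm'] at h
          simpa using h
        have hdist : Tendsto (fun j => 2*‖(T (m+1))^[φ j] p - v‖) atTop (𝓝 0) := by
          have h1 := tendsto_iff_dist_tendsto_zero.1 hconv
          have h2 := h1.const_mul (2:ℝ)
          simp only [mul_zero] at h2
          simpa [dist_eq_norm] using h2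
        have h0 : ‖v - T k v‖ ≤ 0 := ge_of_tendsto' hdist hb
        exact (sub_eq_zero.1 (norm_le_zero_iff.1 h0)).symm
      · have : k = m+1 := by omega
        rw [this]; exact hvfix
  obtain ⟨z₀, hz₀C, hz₀fix⟩ := hcommonfix L le_rfl
  -- Step 2 : weights and basic identities
  set σ : ℕ → ℝ := fun n => ∑ k ∈ Finset.Icc 1 (L-1), (α n)^k with hσdef
  set W : ℕ → ℕ → ℝ := fun k n => if k = 1 then 1 - σ n else (α n)^(k-1) with hWdef
  have hα0 : ∀ n, 0 ≤ α n := fun n => (hα n).1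
  have hα12 : ∀ n, α n ≤ 1/2 := fun n => (hα n).2
  have hσ0 : ∀ n, 0 ≤ σ n :=
    fun n => Finset.sum_nonneg fun k _ => pow_nonneg (hα0 n) k
  have hκ1pos : (0:ℝ) < (1/2)^(L-1) := by positivity
  have hσle : ∀ n, σ n ≤ 1 - (1/2)^(L-1) := by
    intro n
    calc σ n ≤ ∑ k ∈ Finset.Icc 1 (L-1), (1/2:ℝ)^k := by
          apply Finset.sum_le_sum
          intro k _
          exact pow_le_pow_left₀ (hα0 n) (hα12 n) k
    _ = 1 - (1/2)^(L-1) := geom_half (L-1)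
  have hW0 : ∀ k n, 0 ≤ W k n := by
    intro k n
    simp only [hWdef]
    split
    · have := hσle n; linarith
    · exact pow_nonneg (hα0 n) _
  have hWle1 : ∀ k n, W k n ≤ 1 := by
    intro k n
    simp only [hWdef]
    split
    · have := hσ0 n; linarith
    · exact pow_le_one₀ (hα0 n) (by linarith [hα12 n])
  have h1mem : (1:ℕ) ∈ Finset.Icc 1 L := by simp; omega
  have h1notin : (1:ℕ) ∉ Finset.Icc 2 L := by simp
  have hIccsplit : Finset.Icc 1 L = insert 1 (Finset.Icc 2 L) := by
    ext j
    simp only [Finset.mem_Icc, Finset.mem_insert]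
    omega
  have hreindex : ∀ n, ∑ k ∈ Finset.Icc 2 L, (α n)^(k-1) = σ n := by
    intro n
    rw [hσdef]
    have hmap : Finset.Icc 2 L = (Finset.Icc 1 (L-1)).map (addRightEmbedding 1) := by
      rw [Finset.map_add_right_Icc]
      congr 1
      omega
    rw [hmap, Finset.sum_map]
    apply Finset.sum_congr rfl
    intro j _
    simp [addRightEmbedding]
  have hsumW : ∀ n, ∑ k ∈ Finset.Icc 1 L, W k n = 1 := by
    intro n
    rw [hIccsplit, Finset.sum_insert h1notin]
    have : ∑ k ∈ Finset.Icc 2 L, W k n = ∑ k ∈ Finset.Icc 2 L, (α n)^(k-1) := by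
      apply Finset.sum_congr rfl
      intro k hk
      have : k ≠ 1 := by
        have := Finset.mem_Icc.1 hk; omega
      simp [hWdef, this]
    rw [this, hreindex n]
    simp [hWdef]
  set S : ℕ → X := fun n => ∑ k ∈ Finset.Icc 1 L, W k n • T k (x n) with hSdef
  have hSalt : ∀ n, S n = (1 - σ n) • T 1 (x n)
      + ∑ k ∈ Finset.Icc 2 L, (α n)^(k-1) • T k (x n) := by
    intro n
    simp only [hSdef, hWdef]
    rw [hIccsplit, Finset.sum_insert h1notin]
    have h2 : ∀ k ∈ Finset.Icc 2 L,
        (if k = 1 then 1 - σ n else (α n)^(k-1)) • T k (x n)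
          = (α n)^(k-1) • T k (x n) := by
      intro k hk
      have hkne : k ≠ 1 := by
        have := Finset.mem_Icc.1 hk; omega
      simp [hkne]
    rw [Finset.sum_congr rfl h2]
    norm_num
  have hxrec' : ∀ n, x (n+1) = l • S n + (1-l) • x n := by
    intro n
    rw [hxrec n, hSalt n, smul_add, smul_smul]
  have hxC : ∀ n, x n ∈ C := by
    intro n
    induction n with
    | zero => exact hx0
    | succ n ihn =>
      rw [hxrec' n]
      have hSmem : S n ∈ C := by
        rw [hSdef]
        apply hCconv.sum_mem (fun k _ => hW0 k n) (hsumW n)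
        intro k hk
        obtain ⟨hk1, hkL⟩ := Finset.mem_Icc.1 hk
        exact hTmap k hk1 hkL ihn
      exact hCconv hSmem ihn (le_of_lt hl0) (by linarith) (by ring)
  -- Fejér monotonicity w.r.t. any common fixed point
  have hfejer : ∀ w ∈ C, (∀ k, 1 ≤ k → k ≤ L → T k w = w) →
      ∀ n, ‖x (n+1) - w‖ ≤ ‖x n - w‖ := by
    intro w hwC hwfix n
    have hSw : S n - w = ∑ k ∈ Finset.Icc 1 L, W k n • (T k (x n) - w) := by
      have heq : ∑ k ∈ Finset.Icc 1 L, W k n • (T k (x n) - w)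
          = (∑ k ∈ Finset.Icc 1 L, W k n • T k (x n))
            - (∑ k ∈ Finset.Icc 1 L, W k n) • w := by
        rw [Finset.sum_smul, ← Finset.sum_sub_distrib]
        exact Finset.sum_congr rfl fun k _ => smul_sub _ _ _
      rw [heq, hsumW n, one_smul, hSdef]
    have hSnorm : ‖S n - w‖ ≤ ‖x n - w‖ := by
      rw [hSw]
      calc ‖∑ k ∈ Finset.Icc 1 L, W k n • (T k (x n) - w)‖
          ≤ ∑ k ∈ Finset.Icc 1 L, ‖W k n • (T k (x n) - w)‖ := norm_sum_le _ _
      _ ≤ ∑ k ∈ Finset.Icc 1 L, W k n * ‖x n - w‖ := by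
          apply Finset.sum_le_sum
          intro k hk
          obtain ⟨hk1, hkL⟩ := Finset.mem_Icc.1 hk
          rw [norm_smul, Real.norm_eq_abs, abs_of_nonneg (hW0 k n)]
          exact mul_le_mul_of_nonneg_left
            (condB_quasi hγ0 hγhalf hμ0 hμγ (hTmap k hk1 hkL) (hTB k hk1 hkL) hwC (hxC n)
              (hwfix k hk1 hkL)) (hW0 k n)
      _ = ‖x n - w‖ := by rw [← Finset.sum_mul, hsumW n, one_mul]
    have hdecomp : x (n+1) - w = l • (S n - w) + (1-l) • (x n - w) := by
      rw [hxrec' n]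
      module
    calc ‖x (n+1) - w‖ = ‖l • (S n - w) + (1-l) • (x n - w)‖ := by rw [hdecomp]
    _ ≤ ‖l • (S n - w)‖ + ‖(1-l) • (x n - w)‖ := norm_add_le _ _
    _ = l * ‖S n - w‖ + (1-l) * ‖x n - w‖ := by
        rw [norm_smul, norm_smul, Real.norm_eq_abs, Real.norm_eq_abs,
          abs_of_nonneg (le_of_lt hl0), abs_of_nonneg (by linarith : (0:ℝ) ≤ 1-l)]
    _ ≤ l * ‖x n - w‖ + (1-l) * ‖x n - w‖ := by
        have := mul_le_mul_of_nonneg_left hSnorm (le_of_lt hl0)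
        linarith
    _ = ‖x n - w‖ := by ring
  -- the Fejér sequence w.r.t. z₀
  set R : ℕ → ℝ := fun n => ‖x n - z₀‖ with hRdef
  have hRanti : Antitone R := antitone_nat_of_succ_le (hfejer z₀ hz₀C hz₀fix)
  have hR0 : ∀ n, 0 ≤ R n := fun n => norm_nonneg _
  have hRbb : BddBelow (Set.range R) := ⟨0, by rintro v ⟨n, rfl⟩; exact hR0 n⟩
  have htendR : Tendsto R atTop (𝓝 (⨅ n, R n)) := tendsto_atTop_ciInf hRanti hRbb
  set c : ℝ := ⨅ n, R n with hcdef
  have hcle : ∀ n, c ≤ R n := fun n => ciInf_le hRbb n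
  have hc0 : 0 ≤ c := le_ciInf hR0
  rcases eq_or_lt_of_le hc0 with hc | hcpos
  · -- c = 0 : x → z₀ directly
    refine ⟨z₀, hz₀C, hz₀fix, ?_⟩
    rw [tendsto_iff_dist_tendsto_zero]
    have : Tendsto R atTop (𝓝 0) := by rw [← hc] at htendR; exact htendR
    simpa [dist_eq_norm] using this
  · -- c > 0 : uniform convexity drops
    have hR0pos : 0 < R 0 := lt_of_lt_of_le hcpos (hcle 0)
    have hdrop : ∀ ε : ℝ, 0 < ε → ∀ κ : ℝ, 0 < κ → ∀ k, 1 ≤ k → k ≤ L →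
        ∀ᶠ n in atTop, ¬(κ ≤ l * W k n ∧ ε ≤ ‖T k (x n) - x n‖) := by
      intro ε hε κ hκ k hk1 hkL
      obtain ⟨δ', hδ'pos, hsuc⟩ := my_suc (X := X) (div_pos hε hR0pos)
      set m₀ : ℝ := min κ (1-l) with hm₀def
      have hm₀pos : 0 < m₀ := lt_min hκ (by linarith)
      have hdropn : ∀ n, (κ ≤ l * W k n ∧ ε ≤ ‖T k (x n) - x n‖) →
          R (n+1) ≤ R n - m₀*δ'*c := by
        rintro n ⟨hκn, hεn⟩
        set c₁ : ℝ := l * W k n with hc₁def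
        have hc₁0 : 0 ≤ c₁ := le_trans hκ.le hκn
        have hc₁l : c₁ ≤ l := by
          rw [hc₁def]
          nlinarith [hWle1 k n, hW0 k n]
        set a : X := T k (x n) - z₀ with hadef
        set b : X := x n - z₀ with hbdef
        set r : X := ∑ j ∈ (Finset.Icc 1 L).erase k,
          (l * W j n) • (T j (x n) - z₀) with hrdef
        have hkmem : k ∈ Finset.Icc 1 L := Finset.mem_Icc.2 ⟨hk1, hkL⟩
        have hdecomp2 : x (n+1) - z₀ = c₁ • a + (1-l) • b + r := by
          have h1 : x (n+1) - z₀ = l • (S n - z₀) + (1-l) • (x n - z₀) := by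
            rw [hxrec' n]; module
          have h2 : S n - z₀ = ∑ j ∈ Finset.Icc 1 L, W j n • (T j (x n) - z₀) := by
            have heq : ∑ j ∈ Finset.Icc 1 L, W j n • (T j (x n) - z₀)
                = (∑ j ∈ Finset.Icc 1 L, W j n • T j (x n))
                  - (∑ j ∈ Finset.Icc 1 L, W j n) • z₀ := by
              rw [Finset.sum_smul, ← Finset.sum_sub_distrib]
              exact Finset.sum_congr rfl fun j _ => smul_sub _ _ _
            rw [heq, hsumW n, one_smul, hSdef]
          have h3 : l • (S n - z₀) = ∑ j ∈ Finset.Icc 1 L,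
              (l * W j n) • (T j (x n) - z₀) := by
            rw [h2, Finset.smul_sum]
            exact Finset.sum_congr rfl fun j _ => smul_smul _ _ _
          have h4 : ∑ j ∈ Finset.Icc 1 L, (l * W j n) • (T j (x n) - z₀)
              = c₁ • a + r := by
            rw [hc₁def, hadef, hrdef]
            exact (Finset.add_sum_erase _ (fun j => (l * W j n) • (T j (x n) - z₀)) hkmem).symm
          rw [h1, h3, h4]
          abel
        have hna : ‖a‖ ≤ R n :=
          condB_quasi hγ0 hγhalf hμ0 hμγ (hTmap k hk1 hkL) (hTB k hk1 hkL) hz₀C (hxC n)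
            (hz₀fix k hk1 hkL)
        have hnb : ‖b‖ = R n := rfl
        have hRnpos : 0 < R n := lt_of_lt_of_le hcpos (hcle n)
        have hnr : ‖r‖ ≤ (l - c₁) * R n := by
          rw [hrdef]
          calc ‖∑ j ∈ (Finset.Icc 1 L).erase k, (l * W j n) • (T j (x n) - z₀)‖
              ≤ ∑ j ∈ (Finset.Icc 1 L).erase k, ‖(l * W j n) • (T j (x n) - z₀)‖ :=
                norm_sum_le _ _
          _ ≤ ∑ j ∈ (Finset.Icc 1 L).erase k, (l * W j n) * R n := by
              apply Finset.sum_le_sum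
              intro j hj
              obtain ⟨hj1, hjL⟩ := Finset.mem_Icc.1 (Finset.mem_of_mem_erase hj)
              rw [norm_smul, Real.norm_eq_abs,
                abs_of_nonneg (mul_nonneg hl0.le (hW0 j n))]
              exact mul_le_mul_of_nonneg_left
                (condB_quasi hγ0 hγhalf hμ0 hμγ (hTmap j hj1 hjL) (hTB j hj1 hjL) hz₀C
                  (hxC n) (hz₀fix j hj1 hjL)) (mul_nonneg hl0.le (hW0 j n))
          _ = (l - c₁) * R n := by
              rw [← Finset.sum_mul]
              congr 1
              have hsum : l * W k n + ∑ j ∈ (Finset.Icc 1 L).erase k, l * W j n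
                  = ∑ j ∈ Finset.Icc 1 L, l * W j n :=
                Finset.add_sum_erase _ (fun j => l * W j n) hkmem
              have hsuml : ∑ j ∈ Finset.Icc 1 L, l * W j n = l := by
                rw [← Finset.mul_sum, hsumW n, mul_one]
              rw [hsuml] at hsum
              rw [hc₁def]
              linarith
        have hab : (ε / R 0) * R n ≤ ‖a - b‖ := by
          have habeq : a - b = T k (x n) - x n := by rw [hadef, hbdef]; abel
          rw [habeq]
          have hRle : R n ≤ R 0 := hRanti (Nat.zero_le n)
          calc (ε / R 0) * R n ≤ (ε / R 0) * R 0 :=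
                mul_le_mul_of_nonneg_left hRle (by positivity)
          _ = ε := div_mul_cancel₀ ε hR0pos.ne'
          _ ≤ ‖T k (x n) - x n‖ := hεn
        have habs := hsuc (R n) hRnpos a b hna (le_of_eq hnb) hab
        set m : ℝ := min c₁ (1-l) with hmdef
        have hm0 : 0 ≤ m := le_min hc₁0 (by linarith)
        have hmc₁ : m ≤ c₁ := min_le_left _ _
        have hml : m ≤ 1-l := min_le_right _ _
        have hm₀m : m₀ ≤ m := min_le_min hκn le_rfl
        have hdecomp3 : x (n+1) - z₀ = m • (a + b) + ((c₁ - m) • a + ((1-l) - m) • b + r) := by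
          rw [hdecomp2]; module
        have hnorm2 : R (n+1) ≤ m * ((2-δ')*R n) + ((c₁-m)*R n + ((1-l)-m)*R n + (l-c₁)*R n) := by
          have e1 : R (n+1) = ‖x (n+1) - z₀‖ := rfl
          rw [e1, hdecomp3]
          have t1 : ‖m • (a+b)‖ ≤ m * ((2-δ')*R n) := by
            rw [norm_smul, Real.norm_eq_abs, abs_of_nonneg hm0]
            exact mul_le_mul_of_nonneg_left habs hm0
          have t2 : ‖(c₁ - m) • a‖ ≤ (c₁-m)*R n := by
            rw [norm_smul, Real.norm_eq_abs, abs_of_nonneg (by linarith)]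
            exact mul_le_mul_of_nonneg_left hna (by linarith)
          have t3 : ‖((1-l) - m) • b‖ ≤ ((1-l)-m)*R n := by
            rw [norm_smul, Real.norm_eq_abs, abs_of_nonneg (by linarith), hnb]
          have t4 := hnr
          calc ‖m • (a+b) + ((c₁ - m) • a + ((1-l) - m) • b + r)‖
              ≤ ‖m • (a+b)‖ + ‖(c₁ - m) • a + ((1-l) - m) • b + r‖ := norm_add_le _ _
          _ ≤ ‖m • (a+b)‖ + (‖(c₁ - m) • a‖ + ‖((1-l) - m) • b‖ + ‖r‖) := by
              have := norm_add₃_le (a := (c₁ - m) • a) (b := ((1-l) - m) • b) (c := r)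
              linarith
          _ ≤ m * ((2-δ')*R n) + ((c₁-m)*R n + ((1-l)-m)*R n + (l-c₁)*R n) := by
              linarith
        have hfinal : R (n+1) ≤ (1 - m*δ') * R n := by
          have : m * ((2-δ')*R n) + ((c₁-m)*R n + ((1-l)-m)*R n + (l-c₁)*R n)
              = (1 - m*δ') * R n := by ring
          linarith [hnorm2, this]
        have hmm : (1 - m*δ') * R n ≤ (1 - m₀*δ') * R n := by
          apply mul_le_mul_of_nonneg_right _ (hR0 n)
          nlinarith
        have hlast : (1 - m₀*δ') * R n ≤ R n - m₀*δ'*c := by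
          have h1 : m₀*δ'*c ≤ m₀*δ'*R n := by
            apply mul_le_mul_of_nonneg_left (hcle n)
            positivity
          nlinarith
        linarith
      by_contra hcon
      rw [Filter.not_eventually] at hcon
      simp only [not_not] at hcon
      obtain ⟨φ, hφmono, hφbad⟩ := extraction_of_frequently_atTop hcon
      have hind : ∀ j : ℕ, R (φ j) ≤ R (φ 0) - j*(m₀*δ'*c) := by
        intro j
        induction j with
        | zero => simp
        | succ j ihj =>
          have hstep1 : R (φ (j+1)) ≤ R (φ j + 1) :=
            hRanti (hφmono (Nat.lt_succ_self j))
          have hstep2 := hdropn (φ j) (hφbad j)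
          push_cast
          push_cast at ihj
          linarith
      have hpos : 0 < m₀*δ'*c := by positivity
      obtain ⟨J, hJ⟩ := exists_nat_gt (R (φ 0) / (m₀*δ'*c))
      have hJ' : R (φ 0) < J * (m₀*δ'*c) := (div_lt_iff₀ hpos).1 hJ
      have := hind J
      have := hR0 (φ J)
      linarith
    -- T₁ displacement tends to zero along the whole sequence
    have hW1 : ∀ n, l * ((1/2:ℝ)^(L-1)) ≤ l * W 1 n := by
      intro n
      have hWval : W 1 n = 1 - σ n := by simp [hWdef]
      rw [hWval]
      exact mul_le_mul_of_nonneg_left (by linarith [hσle n]) hl0.le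
    have htend1 : Tendsto (fun n => ‖T 1 (x n) - x n‖) atTop (𝓝 0) := by
      apply my_tendsto_zero_of_eventually_lt (fun n => norm_nonneg _)
      intro ε hε
      filter_upwards [hdrop ε hε (l * ((1/2:ℝ)^(L-1))) (by positivity) 1 le_rfl (by omega)]
        with n hn
      by_contra h
      push_neg at h
      exact hn ⟨hW1 n, h⟩
    -- frequently large α
    have hbnd : IsBoundedUnder (· ≥ ·) atTop α := isBoundedUnder_of ⟨0, fun n => hα0 n⟩
    have hβ12 : limsup α atTop ≤ 1/2 :=
      limsup_le_of_le hbnd.isCoboundedUnder_le (Eventually.of_forall fun n => hα12 n)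
    set β : ℝ := limsup α atTop with hβdef
    have hβpos : 0 < β := hlimsup
    have hfreq : ∃ᶠ n in atTop, β/2 < α n :=
      frequently_lt_of_lt_limsup hbnd.isCoboundedUnder_le (by linarith)
    obtain ⟨φ, hφmono, hφβ⟩ := extraction_of_frequently_atTop hfreq
    obtain ⟨w, hwC, ψ, hψmono, hwconv⟩ := hCcomp.tendsto_subseq (fun j => hxC (φ j))
    set θ : ℕ → ℕ := fun j => φ (ψ j) with hθdef
    have hθmono : StrictMono θ := hφmono.comp hψmono
    have hβ2pos : 0 < β/2 := by linarith
    set κ2 : ℝ := l * (β/2)^L with hκ2def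
    have hκ2pos : 0 < κ2 := by positivity
    have hWk : ∀ j k, 2 ≤ k → k ≤ L → κ2 ≤ l * W k (θ j) := by
      intro j k hk2 hkL
      have hkne : k ≠ 1 := by omega
      have hWval : W k (θ j) = (α (θ j))^(k-1) := by simp [hWdef, hkne]
      rw [hWval, hκ2def]
      apply mul_le_mul_of_nonneg_left _ hl0.le
      calc (β/2)^L ≤ (β/2)^(k-1) :=
            pow_le_pow_of_le_one (by positivity) (by linarith) (by omega)
      _ ≤ (α (θ j))^(k-1) :=
            pow_le_pow_left₀ (by positivity) (le_of_lt (hφβ (ψ j))) _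
    have hdispθ : ∀ k, 1 ≤ k → k ≤ L →
        Tendsto (fun j => ‖T k (x (θ j)) - x (θ j)‖) atTop (𝓝 0) := by
      intro k hk1 hkL
      rcases Nat.lt_or_ge k 2 with hk2 | hk2
      · have hkeq : k = 1 := by omega
        subst hkeq
        exact htend1.comp hθmono.tendsto_atTop
      · apply my_tendsto_zero_of_eventually_lt (fun _ => norm_nonneg _)
        intro ε hε
        have hev := hdrop ε hε κ2 hκ2pos k hk1 hkL
        have hev2 := hθmono.tendsto_atTop.eventually hev
        filter_upwards [hev2] with j hj
        by_contra h
        push_neg at h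
        exact hj ⟨hWk j k hk2 hkL, h⟩
    have hwdist : Tendsto (fun j => ‖x (θ j) - w‖) atTop (𝓝 0) := by
      have h1 := tendsto_iff_dist_tendsto_zero.1 hwconv
      simpa [dist_eq_norm] using h1
    have hwfix : ∀ k, 1 ≤ k → k ≤ L → T k w = w := by
      intro k hk1 hkL
      have hb : ∀ j, ‖w - T k w‖ ≤ 2*‖x (θ j) - w‖ + 5*‖T k (x (θ j)) - x (θ j)‖ := by
        intro j
        have h := condB_approx hγ0 hγhalf hμ0 hμγ (hTmap k hk1 hkL) (hTB k hk1 hkL)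
          (hxC (θ j)) hwC
        have hrev : ‖x (θ j) - T k (x (θ j))‖ = ‖T k (x (θ j)) - x (θ j)‖ := norm_sub_rev _ _
        linarith
      have hlim : Tendsto (fun j => 2*‖x (θ j) - w‖ + 5*‖T k (x (θ j)) - x (θ j)‖)
          atTop (𝓝 0) := by
        have := (hwdist.const_mul 2).add ((hdispθ k hk1 hkL).const_mul 5)
        simpa using this
      have h0 : ‖w - T k w‖ ≤ 0 := ge_of_tendsto' hlim hb
      exact (sub_eq_zero.1 (norm_le_zero_iff.1 h0)).symm
    have hRw_anti : Antitone (fun n => ‖x n - w‖) :=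
      antitone_nat_of_succ_le (hfejer w hwC hwfix)
    have hRw_bb : BddBelow (Set.range fun n => ‖x n - w‖) :=
      ⟨0, by rintro v ⟨n, rfl⟩; exact norm_nonneg _⟩
    have htendw : Tendsto (fun n => ‖x n - w‖) atTop (𝓝 (⨅ n, ‖x n - w‖)) :=
      tendsto_atTop_ciInf hRw_anti hRw_bb
    have hsub2 : Tendsto (fun j => ‖x (θ j) - w‖) atTop (𝓝 (⨅ n, ‖x n - w‖)) :=
      htendw.comp hθmono.tendsto_atTop
    have hinf0 : (⨅ n, ‖x n - w‖) = 0 := tendsto_nhds_unique hsub2 hwdist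
    refine ⟨w, hwC, hwfix, ?_⟩
    rw [tendsto_iff_dist_tendsto_zero]
    rw [hinf0] at htendw
    simpa [dist_eq_norm] using htendw
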